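/- arXiv:0909.5594 — 3 statements merged into one kernel-verified Lean document; each statement's English description precedes it below -/
import Mathlib

section
/- For two distinct finite subsets I, J of the positive natural numbers, we have I < J in the Gabriel-Roiter order (i.e., the smallest element of the symmetric difference (I \ J) ∪ (J \ I) belongs to J) if and only if ∑_{i ∈ I} (1/2)^i < ∑_{j ∈ J} (1/2)^j as rational numbers. -/
/-- The Gabriel-Roiter order: `I < J` iff the smallest element of the
symmetric difference `(I \ J) ∪ (J \ I)` belongs to `J`. -/
def grLT (I J : Finset ℕ) : Prop :=
  ∃ m ∈ (I \ J) ∪ (J \ I), m ∈ J ∧ ∀ k ∈ (I \ J) ∪ (J \ I), m ≤ k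

/-- `I ≪ J`: `I ⊆ J` and every element of `I` is strictly smaller than
every element of `J \ I`. -/
def grLL (I J : Finset ℕ) : Prop :=
  I ⊆ J ∧ ∀ a ∈ I, ∀ b ∈ J \ I, a < b

/-- `J` starts with `I`. -/
def startsWith (I J : Finset ℕ) : Prop := I = J ∨ grLL I J

/-- The Gabriel-Roiter measure as a rational number. -/
def grMu (I : Finset ℕ) : ℚ := ∑ i ∈ I, (1/2 : ℚ) ^ i


lemma sum_tail_lt (T : Finset ℕ) (m : ℕ) (hT : ∀ i ∈ T, m < i) :
    ∑ i ∈ T, (1/2 : ℚ) ^ i < (1/2 : ℚ) ^ m := by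
  rcases T.eq_empty_or_nonempty with rfl | hne
  · simp [pow_pos]
  · set n := T.max' hne + 1 with hn
    have hsub : T ⊆ Finset.Ico (m+1) n := by
      intro i hi
      simp only [Finset.mem_Ico]
      exact ⟨hT i hi, Nat.lt_succ_of_le (T.le_max' i hi)⟩
    have h1 : ∑ i ∈ T, (1/2 : ℚ) ^ i ≤ ∑ i ∈ Finset.Ico (m+1) n, (1/2 : ℚ) ^ i := by
      apply Finset.sum_le_sum_of_subset_of_nonneg hsub
      intro i _ _; positivity
    have hmn : m + 1 ≤ n := by
      have := T.max'_mem hne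
      have := hT _ this
      omega
    have h2 : ∑ i ∈ Finset.Ico (m+1) n, (1/2 : ℚ) ^ i
        = ((1/2 : ℚ)^n - (1/2)^(m+1)) / ((1/2) - 1) := by
      exact geom_sum_Ico (by norm_num) hmn
    have hpos : (0:ℚ) < (1/2)^n := by positivity
    have : ((1/2 : ℚ)^n - (1/2)^(m+1)) / ((1/2) - 1) < (1/2)^m := by
      rw [div_lt_iff_of_neg (by norm_num)]
      nlinarith [hpos, pow_succ (1/2:ℚ) m]
    linarith

lemma key (I J : Finset ℕ) (m : ℕ) (hmJ : m ∈ J \ I)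
    (hmin : ∀ k ∈ (I \ J) ∪ (J \ I), m ≤ k) : grMu I < grMu J := by
  have hIJ : grMu (I ∩ J) + grMu (I \ J) = grMu I :=
    Finset.sum_inter_add_sum_sdiff I J _
  have hJI : grMu (I ∩ J) + grMu (J \ I) = grMu J := by
    rw [Finset.inter_comm]
    exact Finset.sum_inter_add_sum_sdiff J I _
  have hlt : grMu (I \ J) < (1/2 : ℚ)^m := by
    apply sum_tail_lt
    intro i hi
    have hle := hmin i (Finset.mem_union_left _ hi)
    rcases Finset.mem_sdiff.mp hi with ⟨hiI, _⟩
    rcases Finset.mem_sdiff.mp hmJ with ⟨_, hmI⟩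
    rcases lt_or_eq_of_le hle with h | rfl
    · exact h
    · exact absurd hiI hmI
  have hge : (1/2 : ℚ)^m ≤ grMu (J \ I) := by
    unfold grMu
    exact Finset.single_le_sum (f := fun i => (1/2:ℚ)^i) (fun i _ => by positivity) hmJ
  rw [← hIJ, ← hJI]
  linarith

theorem stmt_0 (I J : Finset ℕ) (hI : ∀ i ∈ I, 0 < i) (hJ : ∀ j ∈ J, 0 < j)
    (hne : I ≠ J) : grLT I J ↔ grMu I < grMu J := by
  have hSne : ((I \ J) ∪ (J \ I)).Nonempty := by
    rw [Finset.nonempty_iff_ne_empty]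
    intro h
    apply hne
    ext x
    constructor <;> intro hx <;> by_contra hc
    · exact Finset.notMem_empty x (h ▸ Finset.mem_union_left _ (Finset.mem_sdiff.mpr ⟨hx, hc⟩))
    · exact Finset.notMem_empty x (h ▸ Finset.mem_union_right _ (Finset.mem_sdiff.mpr ⟨hx, hc⟩))
  set S := (I \ J) ∪ (J \ I) with hS
  set m := S.min' hSne with hm
  have hmS : m ∈ S := S.min'_mem hSne
  have hmin : ∀ k ∈ S, m ≤ k := fun k hk => S.min'_le k hk
  constructor
  · rintro ⟨m', hm'S, hm'J, hm'min⟩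
    have hmJ : m' ∈ J \ I := by
      rcases Finset.mem_union.mp hm'S with h | h
      · exact absurd hm'J (Finset.mem_sdiff.mp h).2
      · exact h
    exact key I J m' hmJ hm'min
  · intro hmu
    rcases Finset.mem_union.mp hmS with h | h
    · exfalso
      have : grMu J < grMu I := key J I m (by
        rcases Finset.mem_sdiff.mp h with ⟨h1, h2⟩
        exact Finset.mem_sdiff.mpr ⟨h1, h2⟩) (by
        intro k hk
        apply hmin
        rw [hS, Finset.union_comm]
        exact hk)
      linarith
    · exact ⟨m, hmS, (Finset.mem_sdiff.mp h).1, hmin⟩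
end

section
/- Let I, J, K be finite subsets of the positive natural numbers such that I ≪ J with I ≠ J, and such that I < K < J in the Gabriel-Roiter order. Then K starts with I, i.e., I ≪ K. -/
theorem stmt_6 (I J K : Finset ℕ) (hI : ∀ i ∈ I, 0 < i) (hJ : ∀ j ∈ J, 0 < j)
    (hK : ∀ k ∈ K, 0 < k) (hIJ : grLL I J) (hne : I ≠ J)
    (h1 : grLT I K) (h2 : grLT K J) : grLL I K := by
  obtain ⟨hsub, hlt⟩ := hIJ
  obtain ⟨m, hmS, hmK, hmin⟩ := h1
  obtain ⟨n, hnS, hnJ, hnmin⟩ := h2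
  have hmI : m ∉ I := by
    rcases Finset.mem_union.mp hmS with h | h <;>
      simp only [Finset.mem_sdiff] at h <;> tauto
  -- every element of I is strictly less than m
  have key : ∀ a ∈ I, a < m := by
    intro a ha
    by_cases hmJ : m ∈ J
    · exact hlt a ha m (Finset.mem_sdiff.mpr ⟨hmJ, hmI⟩)
    · have hmS' : m ∈ (K \ J) ∪ (J \ K) :=
        Finset.mem_union_left _ (Finset.mem_sdiff.mpr ⟨hmK, hmJ⟩)
      have hnm : n ≤ m := hnmin m hmS'
      have hnK : n ∉ K := by
        rcases Finset.mem_union.mp hnS with h | h <;>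
          simp only [Finset.mem_sdiff] at h <;> tauto
      have hnI : n ∉ I := by
        intro hn
        have : n ∈ (I \ K) ∪ (K \ I) :=
          Finset.mem_union_left _ (Finset.mem_sdiff.mpr ⟨hn, hnK⟩)
        have hmn : m ≤ n := hmin n this
        have : m = n := le_antisymm hmn hnm
        exact hmJ (this ▸ hnJ)
      calc a < n := hlt a ha n (Finset.mem_sdiff.mpr ⟨hnJ, hnI⟩)
        _ ≤ m := hnm
  have hIK : I ⊆ K := by
    intro a ha
    by_contra haK
    have : a ∈ (I \ K) ∪ (K \ I) :=
      Finset.mem_union_left _ (Finset.mem_sdiff.mpr ⟨ha, haK⟩)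
    exact absurd (hmin a this) (not_le.mpr (key a ha))
  refine ⟨hIK, fun a ha b hb => ?_⟩
  have : b ∈ (I \ K) ∪ (K \ I) := Finset.mem_union_right _ hb
  exact lt_of_lt_of_le (key a ha) (hmin b this)
end

section
/- Let I ≪ I' be finite subsets of the positive natural numbers with I ≠ I'. Let b be a positive natural number with b strictly larger than every element of I and strictly smaller than every element of I' \ I, and let a be a positive natural number strictly larger than every element of I'. Then I' ∪ {a} < I ∪ {b} in the Gabriel-Roiter order. -/
theorem stmt_9 (I I' : Finset ℕ) (a b : ℕ) (hI : ∀ i ∈ I, 0 < i)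
    (hI' : ∀ i ∈ I', 0 < i) (ha : 0 < a) (hb : 0 < b)
    (hII' : grLL I I') (hne : I ≠ I')
    (hbI : ∀ i ∈ I, i < b) (hbI' : ∀ k ∈ I' \ I, b < k)
    (haI' : ∀ i ∈ I', i < a) :
    grLT (I' ∪ {a}) (I ∪ {b}) := by
  obtain ⟨hsub, hlt⟩ := hII'
  have hex : ∃ k, k ∈ I' \ I := by
    by_contra h
    push_neg at h
    apply hne
    refine Finset.Subset.antisymm hsub fun x hx => ?_
    by_contra hxI
    exact h x (Finset.mem_sdiff.mpr ⟨hx, hxI⟩)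
  obtain ⟨k0, hk0⟩ := hex
  have hba : b < a := lt_trans (hbI' k0 hk0) (haI' k0 (Finset.mem_sdiff.mp hk0).1)
  have hbnotI' : b ∉ I' := by
    intro h
    by_cases hb2 : b ∈ I
    · exact lt_irrefl b (hbI b hb2)
    · exact lt_irrefl b (hbI' b (Finset.mem_sdiff.mpr ⟨h, hb2⟩))
  refine ⟨b, ?_, Finset.mem_union_right _ (Finset.mem_singleton_self b), ?_⟩
  · apply Finset.mem_union_right
    refine Finset.mem_sdiff.mpr ⟨Finset.mem_union_right _ (Finset.mem_singleton_self b), ?_⟩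
    simp only [Finset.mem_union, Finset.mem_singleton]
    rintro (h | h)
    · exact hbnotI' h
    · exact hba.ne h
  · intro k hk
    simp only [Finset.mem_union, Finset.mem_sdiff, Finset.mem_union,
      Finset.mem_singleton] at hk
    rcases hk with ⟨h1 | h1, h2⟩ | ⟨h1 | h1, h2⟩
    · by_cases hkI : k ∈ I
      · exact absurd (Or.inl hkI) h2
      · exact le_of_lt (hbI' k (Finset.mem_sdiff.mpr ⟨h1, hkI⟩))
    · exact h1 ▸ le_of_lt hba
    · exact absurd (Or.inl (hsub h1)) h2
    · exact le_of_eq h1.symm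
end
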